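/- Fix η₀ > 0 and an integer m ≥ 0. Then the ratio of consecutive Legendre functions of the second kind satisfies lim_{n→∞} q_{n,m}/q_{n−1,m} = e^{−η₀}. -/

import Mathlib

open Real MeasureTheory intervalIntegral Filter Topology

/-- Associated Legendre function of the second kind of half-integer degree,
`Q_{n-1/2}^m(t)`, defined via its real integral representation (valid for `t > 1`). -/
noncomputable def Qh (n m : ℕ) (t : ℝ) : ℝ :=
  ((-1 : ℝ) ^ m / (2 : ℝ) ^ ((n : ℝ) + 1 / 2)) *
    (Real.Gamma ((n : ℝ) + (m : ℝ) + 1 / 2) / Real.Gamma ((n : ℝ) + 1 / 2)) *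
    (t ^ 2 - 1) ^ ((m : ℝ) / 2) *
    ∫ s in (-1 : ℝ)..1, (1 - s ^ 2) ^ ((n : ℝ) - 1 / 2) * (t - s) ^ (-((n : ℝ) + (m : ℝ) + 1 / 2))

/-- `q_{n,m} = Q_{n-1/2}^m(cosh η₀)`. -/
noncomputable def qh (η₀ : ℝ) (n m : ℕ) : ℝ := Qh n m (Real.cosh η₀)

/-- `Φ_n^{+1}(θ) = cos (n θ)`, `Φ_n^{-1}(θ) = sin (n θ)`. -/
noncomputable def Phi (ν : ℤ) (n : ℤ) (θ : ℝ) : ℝ :=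
  if ν = 1 then Real.cos ((n : ℝ) * θ) else Real.sin ((n : ℝ) * θ)

/-- A quadruple `(n, m, ν, μ)` is admissible. -/
def Admissible (n m : ℕ) (ν μ : ℤ) : Prop :=
  (ν = 1 ∨ ν = -1) ∧ (μ = 1 ∨ μ = -1) ∧ ¬(n = 0 ∧ ν = -1) ∧ ¬(m = 0 ∧ μ = -1)

/-- Toroidal Neumann constant `ρ_{n,m}(η₀)` (`n ≥ 1`). -/
noncomputable def rhoT (η₀ : ℝ) (n m : ℕ) : ℝ :=
  if n = 1 then
    (1 / (2 * Real.sinh η₀)) *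
      (Real.cosh η₀ + (2 * (m : ℝ) - 1) * qh η₀ 1 m / qh η₀ 0 m)
  else
    (1 / (4 * Real.sinh η₀)) *
      ((2 * (n : ℝ) - 1) * Real.cosh η₀ +
        (2 * ((m : ℝ) - (n : ℝ)) + 1) * qh η₀ n m / qh η₀ (n - 1) m)

/-- Toroidal Neumann constant `σ_{n,m}(η₀)`. -/
noncomputable def sigmaT (η₀ : ℝ) (n m : ℕ) : ℝ :=
  (-1 / (2 * Real.sinh η₀)) *
    ((2 * (n : ℝ) * Real.cosh η₀ ^ 2 + 1) +
      (2 * ((m : ℝ) - (n : ℝ)) - 1) * Real.cosh η₀ * qh η₀ (n + 1) m / qh η₀ n m)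

/-- Toroidal Neumann constant `τ_{n,m}(η₀)`. -/
noncomputable def tauT (η₀ : ℝ) (n m : ℕ) : ℝ :=
  (1 / (4 * Real.sinh η₀)) *
    ((2 * (n : ℝ) + 3) * Real.cosh η₀ +
      (2 * ((m : ℝ) - (n : ℝ)) - 3) * qh η₀ (n + 2) m / qh η₀ (n + 1) m)

/-- The normal derivative `N_{n,m}^{ν,μ}(θ,φ)` of the interior toroidal harmonic
`I_{n,m}^{ν,μ}` on the torus `η = η₀`. -/
noncomputable def NDer (η₀ : ℝ) (n m : ℕ) (ν μ : ℤ) (θ φ : ℝ) : ℝ :=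
  (Real.sqrt (Real.cosh η₀ - Real.cos θ) / (4 * Real.sinh η₀)) * Phi μ (m : ℤ) φ *
    (Phi ν ((n : ℤ) - 1) θ *
        ((1 + 2 * (n : ℝ)) * Real.cosh η₀ -
          (2 * ((n : ℝ) - (m : ℝ)) + 1) * qh η₀ (n + 1) m / qh η₀ n m) -
      2 * Phi ν (n : ℤ) θ *
        ((2 * (n : ℝ) * Real.cosh η₀ ^ 2 + 1) -
          (2 * ((n : ℝ) - (m : ℝ)) + 1) * Real.cosh η₀ * qh η₀ (n + 1) m / qh η₀ n m) +
      Phi ν ((n : ℤ) + 1) θ *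
        ((1 + 2 * (n : ℝ)) * Real.cosh η₀ -
          (2 * ((n : ℝ) - (m : ℝ)) + 1) * qh η₀ (n + 1) m / qh η₀ n m))

/-- Interior toroidal harmonic `I_{n,m}^{ν,μ}[η₀]` in toroidal coordinates. -/
noncomputable def Ih (η₀ : ℝ) (n m : ℕ) (ν μ : ℤ) (η θ φ : ℝ) : ℝ :=
  Real.sqrt (Real.cosh η - Real.cos θ) *
    (Qh n m (Real.cosh η) / Qh n m (Real.cosh η₀)) * Phi ν (n : ℤ) θ * Phi μ (m : ℤ) φ

section QRatioAux
open Set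

noncomputable def gT (t s : ℝ) : ℝ := (1 - s ^ 2) / (t - s)
noncomputable def wT (m : ℕ) (t s : ℝ) : ℝ :=
  (1 - s ^ 2) ^ (-(1 / 2 : ℝ)) * (t - s) ^ (-((m : ℝ) + 1 / 2))

lemma half_ne (n : ℕ) : ((n : ℝ) - 1 / 2) ≠ 0 := by
  intro h
  have h2 : (2 : ℝ) * n = 1 := by linarith
  have : (2 * n : ℕ) = 1 := by exact_mod_cast h2
  omega

lemma ptwiseT (m n : ℕ) {t : ℝ} (ht : 1 < t) {s : ℝ} (hs : s ∈ Icc (-1 : ℝ) 1) :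
    (1 - s ^ 2) ^ ((n : ℝ) - 1 / 2) * (t - s) ^ (-((n : ℝ) + (m : ℝ) + 1 / 2)) =
      gT t s ^ n * wT m t s := by
  obtain ⟨hs1, hs2⟩ := hs
  have hb : 0 < t - s := by linarith
  rcases eq_or_lt_of_le hs1 with h1 | h1
  · have : 1 - s ^ 2 = 0 := by nlinarith [h1.symm]
    simp only [gT, wT, this, Real.zero_rpow (half_ne n),
      Real.zero_rpow (show -(1/2:ℝ) ≠ 0 by norm_num), zero_mul, mul_zero, zero_div]
  rcases eq_or_lt_of_le hs2 with h2 | h2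
  · have : 1 - s ^ 2 = 0 := by nlinarith
    simp only [gT, wT, this, Real.zero_rpow (half_ne n),
      Real.zero_rpow (show -(1/2:ℝ) ≠ 0 by norm_num), zero_mul, mul_zero, zero_div]
  · have ha : 0 < 1 - s ^ 2 := by nlinarith
    have e1 : (1 - s ^ 2) ^ ((n : ℝ) - 1 / 2) = (1 - s ^ 2) ^ (n : ℕ) * (1 - s ^ 2) ^ (-(1/2 : ℝ)) := by
      rw [show ((n : ℝ) - 1 / 2) = (n : ℝ) + (-(1/2 : ℝ)) by ring, Real.rpow_add ha,
        Real.rpow_natCast]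
    have e2 : (t - s) ^ (-((n : ℝ) + (m : ℝ) + 1 / 2)) =
        ((t - s) ^ (n : ℕ))⁻¹ * (t - s) ^ (-((m : ℝ) + 1 / 2)) := by
      rw [show (-((n : ℝ) + (m : ℝ) + 1 / 2)) = (-(n : ℝ)) + (-((m : ℝ) + 1/2)) by ring,
        Real.rpow_add hb, Real.rpow_neg hb.le, Real.rpow_natCast]
    rw [e1, e2, gT, wT, div_pow]
    field_simp

lemma contFT (m n : ℕ) (hn : 1 ≤ n) {t : ℝ} (ht : 1 < t) :
    ContinuousOn (fun s => (1 - s ^ 2) ^ ((n : ℝ) - 1 / 2) * (t - s) ^ (-((n : ℝ) + (m : ℝ) + 1 / 2)))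
      (Icc (-1 : ℝ) 1) := by
  intro s hs
  have hb : t - s ≠ 0 := by have := hs.2; intro h; simp at *; nlinarith
  have hq : (0:ℝ) ≤ (n : ℝ) - 1 / 2 := by
    have : (1:ℝ) ≤ (n:ℝ) := by exact_mod_cast hn
    linarith
  have c1 : ContinuousAt (fun s : ℝ => (1 - s ^ 2) ^ ((n : ℝ) - 1 / 2)) s :=
    (Real.continuousAt_rpow_const _ _ (Or.inr hq)).comp (by fun_prop)
  have c2 : ContinuousAt (fun s : ℝ => (t - s) ^ (-((n : ℝ) + (m : ℝ) + 1 / 2))) s :=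
    (Real.continuousAt_rpow_const _ _ (Or.inl hb)).comp (by fun_prop)
  exact (c1.mul c2).continuousWithinAt

lemma integrable_fT (m n : ℕ) (hn : 1 ≤ n) {t : ℝ} (ht : 1 < t) :
    IntegrableOn (fun s => gT t s ^ n * wT m t s) (Ioo (-1 : ℝ) 1) := by
  have h : IntegrableOn (fun s => (1 - s ^ 2) ^ ((n : ℝ) - 1 / 2) * (t - s) ^ (-((n : ℝ) + (m : ℝ) + 1 / 2))) (Ioo (-1 : ℝ) 1) volume :=
    ((contFT m n hn ht).integrableOn_Icc).mono_set Ioo_subset_Icc_self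
  exact h.congr_fun (fun s hs => ptwiseT m n ht (Ioo_subset_Icc_self hs)) measurableSet_Ioo

lemma cosh_gt (η₀ : ℝ) (hη : 0 < η₀) : 1 < Real.cosh η₀ :=
  Real.one_lt_cosh.mpr hη.ne'

lemma gT_le (η₀ : ℝ) (hη : 0 < η₀) {s : ℝ} (hs : s ≤ 1) :
    gT (Real.cosh η₀) s ≤ 2 * Real.exp (-η₀) := by
  have ht := cosh_gt η₀ hη
  have hb : 0 < Real.cosh η₀ - s := by linarith
  rw [gT, div_le_iff₀ hb]
  have hMt : (2 * Real.exp (-η₀)) * Real.cosh η₀ = 1 + Real.exp (-η₀) ^ 2 := by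
    rw [Real.cosh_eq, Real.exp_neg]
    have := Real.exp_ne_zero η₀
    field_simp
  nlinarith [sq_nonneg (s - Real.exp (-η₀))]

lemma gT_at (η₀ : ℝ) (hη : 0 < η₀) :
    gT (Real.cosh η₀) (Real.exp (-η₀)) = 2 * Real.exp (-η₀) := by
  have hE := Real.exp_pos η₀
  have h2 : Real.exp η₀ ^ 2 - 1 ≠ 0 := by
    have : 1 < Real.exp η₀ := by
      rw [show (1:ℝ) = Real.exp 0 by simp]; exact Real.exp_lt_exp.mpr hη
    nlinarith
  rw [gT, Real.cosh_eq, Real.exp_neg]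
  rw [div_eq_iff (by
    have : 1 < Real.exp η₀ := by
      rw [show (1:ℝ) = Real.exp 0 by simp]; exact Real.exp_lt_exp.mpr hη
    have hne := Real.exp_ne_zero η₀
    intro h; field_simp at h; nlinarith)]
  field_simp
  ring

lemma gT_pos (η₀ : ℝ) (hη : 0 < η₀) {s : ℝ} (hs : s ∈ Ioo (-1:ℝ) 1) :
    0 < gT (Real.cosh η₀) s := by
  have ht := cosh_gt η₀ hη
  exact div_pos (by nlinarith [hs.1, hs.2]) (by have := hs.2; linarith)

lemma wT_pos (m : ℕ) (η₀ : ℝ) (hη : 0 < η₀) {s : ℝ} (hs : s ∈ Ioo (-1:ℝ) 1) :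
    0 < wT m (Real.cosh η₀) s := by
  have ht := cosh_gt η₀ hη
  exact mul_pos (Real.rpow_pos_of_pos (by nlinarith [hs.1, hs.2]) _)
    (Real.rpow_pos_of_pos (by have := hs.2; linarith) _)

lemma wT_nonneg (m : ℕ) {t s : ℝ} (ht : 1 < t) (hs : s ∈ Icc (-1:ℝ) 1) : 0 ≤ wT m t s := by
  have h1 : (0:ℝ) ≤ 1 - s ^ 2 := by nlinarith [hs.1, hs.2]
  have h2 : (0:ℝ) ≤ t - s := by have := hs.2; linarith
  exact mul_nonneg (Real.rpow_nonneg h1 _) (Real.rpow_nonneg h2 _)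

lemma gT_nonneg (η₀ : ℝ) (hη : 0 < η₀) {s : ℝ} (hs : s ∈ Icc (-1:ℝ) 1) :
    0 ≤ gT (Real.cosh η₀) s := by
  have ht := cosh_gt η₀ hη
  exact div_nonneg (by nlinarith [hs.1, hs.2]) (by have := hs.2; linarith)

noncomputable def KT (m : ℕ) (t : ℝ) (n : ℕ) : ℝ :=
  ∫ s in Ioo (-1 : ℝ) 1, gT t s ^ n * wT m t s

set_option maxHeartbeats 2000000 in
lemma KT_ratio (η₀ : ℝ) (hη : 0 < η₀) (m : ℕ) :
    Tendsto (fun n : ℕ => KT m (Real.cosh η₀) (n + 1) / KT m (Real.cosh η₀) n) atTop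
      (nhds (2 * Real.exp (-η₀))) := by
  set t := Real.cosh η₀ with ht_def
  have ht : 1 < t := cosh_gt η₀ hη
  set M : ℝ := 2 * Real.exp (-η₀) with hM_def
  have hM : 0 < M := by positivity
  set f : ℕ → ℝ → ℝ := fun n s => gT t s ^ n * wT m t s with hf_def
  have hfint : ∀ n, 1 ≤ n → IntegrableOn (f n) (Ioo (-1 : ℝ) 1) volume :=
    fun n hn => integrable_fT m n hn ht
  have hfnn : ∀ n, ∀ s ∈ Icc (-1:ℝ) 1, 0 ≤ f n s := by
    intro n s hs
    exact mul_nonneg (pow_nonneg (gT_nonneg η₀ hη hs) n) (wT_nonneg m ht hs)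
  rw [← tendsto_add_atTop_iff_nat 1]
  rw [Metric.tendsto_atTop]
  intro ε hε
  set ε₁ : ℝ := min (ε / 4) (M / 2) with hε₁_def
  have hε₁ : 0 < ε₁ := lt_min (by linarith) (by linarith)
  have hε₁M : ε₁ < M := (min_le_right _ _).trans_lt (by linarith)
  have hε₁ε : ε₁ ≤ ε / 4 := min_le_left _ _
  set r : ℝ := M - ε₁ / 2 with hr_def
  have hr : 0 < r := by simp only [hr_def]; linarith
  have hMε : 0 < M - ε₁ := by linarith
  have hMεr : M - ε₁ < r := by simp only [hr_def]; linarith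
  -- the maximizer
  set c : ℝ := Real.exp (-η₀) with hc_def
  have hc0 : 0 < c := Real.exp_pos _
  have hc1 : c < 1 := Real.exp_lt_one_iff.mpr (by linarith)
  have hct : c < t := by
    calc c < 1 := hc1
    _ < t := ht
  have hgc : ContinuousAt (gT t) c := by
    apply ContinuousAt.div (by fun_prop) (by fun_prop)
    intro h
    have : t = c := by linarith [sub_eq_zero.mp h]
    linarith
  obtain ⟨δ₀, hδ₀, hball⟩ := Metric.continuousAt_iff.mp hgc (ε₁ / 2) (by linarith)
  set δ : ℝ := min (δ₀ / 2) (min (c / 2) ((1 - c) / 2)) with hδ_def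
  have hδ : 0 < δ := lt_min (by linarith) (lt_min (by linarith) (by linarith))
  have hδδ₀ : δ < δ₀ := (min_le_left _ _).trans_lt (by linarith)
  have hδc : δ ≤ c / 2 := (min_le_right _ _).trans (min_le_left _ _)
  have hδc1 : δ ≤ (1 - c) / 2 := (min_le_right _ _).trans (min_le_right _ _)
  have hJsub : Icc (c - δ) (c + δ) ⊆ Ioo (-1 : ℝ) 1 := by
    intro x hx
    constructor
    · have := hx.1; nlinarith
    · have := hx.2; nlinarith
  have hgr : ∀ x ∈ Icc (c - δ) (c + δ), r ≤ gT t x := by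
    intro x hx
    have hd : dist x c < δ₀ := by
      rw [Real.dist_eq, abs_lt]
      constructor
      · have := hx.1; linarith
      · have := hx.2; linarith
    have := hball hd
    rw [Real.dist_eq, gT_at η₀ hη, ← hM_def, abs_lt] at this
    simp only [hr_def]
    linarith [this.1]
  -- the two constants A (> 0) and B (≥ 0)
  set A : ℝ := ∫ s in Ioo (c - δ) (c + δ), f 1 s with hA_def
  set B : ℝ := ∫ s in Ioo (-1 : ℝ) 1, f 1 s with hB_def
  have hf1int : IntegrableOn (f 1) (Ioo (-1 : ℝ) 1) volume := hfint 1 le_rfl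
  have hJsub' : Ioo (c - δ) (c + δ) ⊆ Ioo (-1:ℝ) 1 := fun x hx => hJsub (Ioo_subset_Icc_self hx)
  have hA : 0 < A := by
    have hab : c - δ < c + δ := by linarith
    have : A = ∫ s in (c - δ)..(c + δ), f 1 s := by
      rw [intervalIntegral.integral_of_le hab.le, integral_Ioc_eq_integral_Ioo]
    rw [this]
    apply intervalIntegral.intervalIntegral_pos_of_pos_on _ _ hab
    · rw [intervalIntegrable_iff, uIoc_of_le hab.le]
      exact hf1int.mono_set fun x hx => hJsub (Ioc_subset_Icc_self hx)
    · intro x hx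
      have hx' := hJsub' hx
      simp only [hf_def, pow_one]
      exact mul_pos (gT_pos η₀ hη hx') (wT_pos m η₀ hη hx')
  have hB0 : 0 ≤ B :=
    setIntegral_nonneg measurableSet_Ioo fun s hs => hfnn 1 s (Ioo_subset_Icc_self hs)
  have hKT : ∀ k, KT m t k = ∫ s in Ioo (-1:ℝ) 1, f k s := fun k => rfl
  have hae_nn : ∀ k, (0 : ℝ → ℝ) ≤ᶠ[ae (volume.restrict (Ioo (-1:ℝ) 1))] f k := by
    intro k
    refine (ae_restrict_iff' measurableSet_Ioo).mpr (ae_of_all _ fun s hs => ?_)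
    exact hfnn k s (Ioo_subset_Icc_self hs)
  have hK_lb : ∀ n : ℕ, r ^ n * A ≤ KT m t (n + 1) := by
    intro n
    have h1 : ∫ s in Ioo (c-δ) (c+δ), f (n+1) s ≤ KT m t (n+1) := by
      rw [hKT]
      exact setIntegral_mono_set (hfint (n+1) (by omega)) (hae_nn (n+1))
        (HasSubset.Subset.eventuallyLE hJsub')
    have h2 : ∫ s in Ioo (c-δ) (c+δ), r ^ n * f 1 s ≤ ∫ s in Ioo (c-δ) (c+δ), f (n+1) s := by
      apply setIntegral_mono_on ((hf1int.mono_set hJsub').const_mul _)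
        ((hfint (n+1) (by omega)).mono_set hJsub') measurableSet_Ioo
      intro x hx
      have hx1 := Ioo_subset_Icc_self (hJsub' hx)
      have hg0 : 0 ≤ gT t x := gT_nonneg η₀ hη hx1
      have hw0 : 0 ≤ wT m t x := wT_nonneg m ht hx1
      have hrg : r ≤ gT t x := hgr x (Ioo_subset_Icc_self hx)
      have hpow : r ^ n ≤ gT t x ^ n := pow_le_pow_left₀ hr.le hrg n
      simp only [hf_def, pow_one, pow_succ]
      nlinarith [mul_nonneg hg0 hw0, mul_nonneg (sub_nonneg.mpr hpow) (mul_nonneg hg0 hw0)]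
    calc r ^ n * A = ∫ s in Ioo (c-δ) (c+δ), r ^ n * f 1 s := (MeasureTheory.integral_const_mul _ _).symm
      _ ≤ ∫ s in Ioo (c-δ) (c+δ), f (n+1) s := h2
      _ ≤ KT m t (n+1) := h1
  have hK_pos : ∀ n : ℕ, 0 < KT m t (n+1) := fun n => lt_of_lt_of_le (by positivity) (hK_lb n)
  have hK_ub : ∀ n : ℕ, KT m t (n+2) ≤ M * KT m t (n+1) := by
    intro n
    rw [hKT, hKT, ← MeasureTheory.integral_const_mul]
    apply setIntegral_mono_on (hfint (n+2) (by omega))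
      ((hfint (n+1) (by omega)).const_mul _) measurableSet_Ioo
    intro x hx
    have hx1 := Ioo_subset_Icc_self hx
    have hg0 : 0 ≤ gT t x := gT_nonneg η₀ hη hx1
    have hw0 : 0 ≤ wT m t x := wT_nonneg m ht hx1
    have hgM : gT t x ≤ M := gT_le η₀ hη hx1.2
    simp only [hf_def]
    have h1 : 0 ≤ gT t x ^ (n+1) * wT m t x := mul_nonneg (pow_nonneg hg0 _) hw0
    calc gT t x ^ (n+2) * wT m t x = gT t x * (gT t x ^ (n+1) * wT m t x) := by ring
      _ ≤ M * (gT t x ^ (n+1) * wT m t x) := mul_le_mul_of_nonneg_right hgM h1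
  have hgm : Measurable (gT t) := by
    apply Measurable.div <;> fun_prop
  set S : Set ℝ := {x | M - ε₁ ≤ gT t x} with hS_def
  have hS : MeasurableSet S := measurableSet_le measurable_const hgm
  have hK_lb2 : ∀ n : ℕ, (M - ε₁) * KT m t (n+1) - (M - ε₁)^(n+1) * B ≤ KT m t (n+2) := by
    intro n
    have hsplit2 := integral_inter_add_diff (μ := volume) hS (hfint (n+2) (by omega))
    have hsplit1 := integral_inter_add_diff (μ := volume) hS (hfint (n+1) (by omega))
    have hcap : (M - ε₁) * ∫ s in Ioo (-1:ℝ) 1 ∩ S, f (n+1) s ≤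
        ∫ s in Ioo (-1:ℝ) 1 ∩ S, f (n+2) s := by
      rw [← MeasureTheory.integral_const_mul]
      apply setIntegral_mono_on (((hfint (n+1) (by omega)).mono_set inter_subset_left).const_mul _)
        ((hfint (n+2) (by omega)).mono_set inter_subset_left) (measurableSet_Ioo.inter hS)
      intro x hx
      have hx1 := Ioo_subset_Icc_self hx.1
      have hg0 : 0 ≤ gT t x := gT_nonneg η₀ hη hx1
      have hw0 : 0 ≤ wT m t x := wT_nonneg m ht hx1
      have hxS : M - ε₁ ≤ gT t x := hx.2
      simp only [hf_def]
      have h1 : 0 ≤ gT t x ^ (n+1) * wT m t x := mul_nonneg (pow_nonneg hg0 _) hw0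
      calc (M - ε₁) * (gT t x ^ (n+1) * wT m t x)
          ≤ gT t x * (gT t x ^ (n+1) * wT m t x) := mul_le_mul_of_nonneg_right hxS h1
        _ = gT t x ^ (n+2) * wT m t x := by ring
    have hdiff2 : (0:ℝ) ≤ ∫ s in Ioo (-1:ℝ) 1 \ S, f (n+2) s :=
      setIntegral_nonneg (measurableSet_Ioo.diff hS) fun x hx => hfnn _ x (Ioo_subset_Icc_self hx.1)
    have hdiff1 : ∫ s in Ioo (-1:ℝ) 1 \ S, f (n+1) s ≤ (M - ε₁)^n * B := by
      have step1 : ∫ s in Ioo (-1:ℝ) 1 \ S, f (n+1) s ≤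
          ∫ s in Ioo (-1:ℝ) 1 \ S, (M - ε₁)^n * f 1 s := by
        apply setIntegral_mono_on ((hfint (n+1) (by omega)).mono_set diff_subset)
          ((hf1int.mono_set diff_subset).const_mul _) (measurableSet_Ioo.diff hS)
        intro x hx
        have hx1 := Ioo_subset_Icc_self hx.1
        have hg0 : 0 ≤ gT t x := gT_nonneg η₀ hη hx1
        have hw0 : 0 ≤ wT m t x := wT_nonneg m ht hx1
        have hxS : gT t x ≤ M - ε₁ := le_of_not_ge hx.2
        have hpow : gT t x ^ n ≤ (M - ε₁)^n := pow_le_pow_left₀ hg0 hxS n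
        simp only [hf_def, pow_one, pow_succ]
        nlinarith [mul_nonneg hg0 hw0, mul_nonneg (sub_nonneg.mpr hpow) (mul_nonneg hg0 hw0)]
      have step3 : ∫ s in Ioo (-1:ℝ) 1 \ S, f 1 s ≤ B :=
        setIntegral_mono_set hf1int (hae_nn 1) (HasSubset.Subset.eventuallyLE diff_subset)
      have hpw : (0:ℝ) ≤ (M - ε₁)^n := pow_nonneg hMε.le n
      calc ∫ s in Ioo (-1:ℝ) 1 \ S, f (n+1) s
          ≤ ∫ s in Ioo (-1:ℝ) 1 \ S, (M - ε₁)^n * f 1 s := step1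
        _ = (M - ε₁)^n * ∫ s in Ioo (-1:ℝ) 1 \ S, f 1 s := MeasureTheory.integral_const_mul _ _
        _ ≤ (M - ε₁)^n * B := mul_le_mul_of_nonneg_left step3 hpw
    have h5 : (M - ε₁) * (∫ s in Ioo (-1:ℝ) 1 \ S, f (n+1) s) ≤ (M - ε₁)^(n+1) * B := by
      calc (M - ε₁) * (∫ s in Ioo (-1:ℝ) 1 \ S, f (n+1) s)
          ≤ (M - ε₁) * ((M - ε₁)^n * B) := mul_le_mul_of_nonneg_left hdiff1 hMε.le
        _ = (M - ε₁)^(n+1) * B := by ring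
    have hexp : (M - ε₁) * KT m t (n+1) =
        (M - ε₁) * (∫ s in Ioo (-1:ℝ) 1 ∩ S, f (n+1) s) +
        (M - ε₁) * (∫ s in Ioo (-1:ℝ) 1 \ S, f (n+1) s) := by
      rw [hKT, ← hsplit1]; ring
    rw [hKT (n+2), ← hsplit2]
    linarith
  set ρ : ℝ := (M - ε₁) / r with hρ_def
  have hρ0 : (0:ℝ) ≤ ρ := div_nonneg hMε.le hr.le
  have hρ1 : ρ < 1 := (div_lt_one hr).mpr hMεr
  set C : ℝ := (M - ε₁) * B / A with hC_def
  have hC0 : 0 ≤ C := div_nonneg (mul_nonneg hMε.le hB0) hA.le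
  have hcn : Tendsto (fun n : ℕ => C * ρ ^ n) atTop (nhds 0) := by
    simpa using (tendsto_pow_atTop_nhds_zero_of_lt_one hρ0 hρ1).const_mul C
  have hev : ∀ᶠ n : ℕ in atTop, C * ρ ^ n < ε₁ := hcn.eventually (gt_mem_nhds hε₁)
  obtain ⟨N, hN⟩ := eventually_atTop.mp hev
  refine ⟨N, fun n hn => ?_⟩
  have hcnε : C * ρ ^ n < ε₁ := hN n hn
  have hub : KT m t (n+2) / KT m t (n+1) ≤ M := by
    rw [div_le_iff₀ (hK_pos n)]
    exact hK_ub n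
  have hclb : (M - ε₁)^(n+1) * B ≤ (C * ρ ^ n) * KT m t (n+1) := by
    have h1 : (C * ρ ^ n) * (r ^ n * A) = (M - ε₁)^(n+1) * B := by
      rw [hC_def, hρ_def, div_pow]
      field_simp
      ring
    have h2 : 0 ≤ C * ρ ^ n := mul_nonneg hC0 (pow_nonneg hρ0 n)
    calc (M - ε₁)^(n+1) * B = (C * ρ ^ n) * (r ^ n * A) := h1.symm
      _ ≤ (C * ρ ^ n) * KT m t (n+1) := mul_le_mul_of_nonneg_left (hK_lb n) h2
  have hlb : M - 2*ε₁ ≤ KT m t (n+2) / KT m t (n+1) := by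
    rw [le_div_iff₀ (hK_pos n)]
    have h3 : (C * ρ ^ n) * KT m t (n+1) ≤ ε₁ * KT m t (n+1) :=
      mul_le_mul_of_nonneg_right hcnε.le (hK_pos n).le
    have h4 := hK_lb2 n
    nlinarith [hK_pos n]
  rw [Real.dist_eq, abs_lt]
  constructor
  · have : (n+1)+1 = n+2 := rfl
    rw [this]
    linarith
  · have : (n+1)+1 = n+2 := rfl
    rw [this]
    linarith

lemma integrable_fT' (m n : ℕ) (hn : 1 ≤ n) {t : ℝ} (ht : 1 < t) :
    IntegrableOn (fun s => gT t s ^ n * wT m t s) (Icc (-1 : ℝ) 1) volume :=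
  ((contFT m n hn ht).integrableOn_Icc).congr_fun (fun s hs => ptwiseT m n ht hs) measurableSet_Icc

lemma KT_pos (η₀ : ℝ) (hη : 0 < η₀) (m n : ℕ) (hn : 1 ≤ n) : 0 < KT m (Real.cosh η₀) n := by
  have ht := cosh_gt η₀ hη
  have heq : KT m (Real.cosh η₀) n =
      ∫ s in (-1:ℝ)..1, gT (Real.cosh η₀) s ^ n * wT m (Real.cosh η₀) s := by
    rw [intervalIntegral.integral_of_le (by norm_num), integral_Ioc_eq_integral_Ioo, KT]
  rw [heq]
  apply intervalIntegral.intervalIntegral_pos_of_pos_on _ _ (by norm_num)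
  · rw [intervalIntegrable_iff, uIoc_of_le (by norm_num : (-1:ℝ) ≤ 1)]
    exact (integrable_fT' m n hn ht).mono_set Ioc_subset_Icc_self
  · intro x hx
    exact mul_pos (pow_pos (gT_pos η₀ hη hx) n) (wT_pos m η₀ hη hx)

lemma Qh_eq (n m : ℕ) {t : ℝ} (ht : 1 < t) :
    Qh n m t = ((-1 : ℝ) ^ m / (2 : ℝ) ^ ((n : ℝ) + 1 / 2)) *
      (Real.Gamma ((n : ℝ) + (m : ℝ) + 1 / 2) / Real.Gamma ((n : ℝ) + 1 / 2)) *
      (t ^ 2 - 1) ^ ((m : ℝ) / 2) * KT m t n := by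
  rw [Qh, KT]
  congr 1
  rw [intervalIntegral.integral_of_le (by norm_num), integral_Ioc_eq_integral_Ioo]
  exact setIntegral_congr_fun measurableSet_Ioo fun s hs => ptwiseT m n ht (Ioo_subset_Icc_self hs)


end QRatioAux

/-- ratio asymptotics of consecutive half-integer Legendre functions of
the second kind. -/
theorem q_ratio_limit (η₀ : ℝ) (hη₀ : 0 < η₀) (m : ℕ) :
    Filter.Tendsto (fun n : ℕ => qh η₀ (n + 1) m / qh η₀ n m)
      Filter.atTop (nhds (Real.exp (-η₀))) := by
  have ht := cosh_gt η₀ hη₀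
  set t := Real.cosh η₀ with htdef
  have hmodel : Tendsto
      (fun n : ℕ => (((n:ℝ)+(m:ℝ)+1/2)/(((n:ℝ)+1/2)*2)) * (KT m t (n+1) / KT m t n)) atTop
      (nhds (Real.exp (-η₀))) := by
    have hden : Tendsto (fun n : ℕ => ((n:ℝ)+1/2)) atTop atTop :=
      tendsto_atTop_add_const_right _ _ tendsto_natCast_atTop_atTop
    have h0 : Tendsto (fun n : ℕ => (m:ℝ)/((n:ℝ)+1/2)) atTop (nhds 0) :=
      Tendsto.div_atTop tendsto_const_nhds hden
    have h1 : Tendsto (fun n : ℕ => ((n:ℝ)+(m:ℝ)+1/2)/(((n:ℝ)+1/2)*2)) atTop (nhds (1/2)) := by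
      have heq : (fun n : ℕ => ((n:ℝ)+(m:ℝ)+1/2)/(((n:ℝ)+1/2)*2)) =
          fun n : ℕ => (1 + (m:ℝ)/((n:ℝ)+1/2))/2 := by
        funext n
        have hne : ((n:ℝ)+1/2) ≠ 0 := by positivity
        field_simp
        ring
      rw [heq]
      have h2 : Tendsto (fun n : ℕ => (1 + (m:ℝ)/((n:ℝ)+1/2))/2) atTop (nhds ((1+0)/2)) :=
        ((tendsto_const_nhds (x := (1:ℝ))).add h0).div_const 2
      norm_num at h2
      exact h2
    have h2 := KT_ratio η₀ hη₀ m
    have h3 := h1.mul h2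
    have : (1/2 : ℝ) * (2 * Real.exp (-η₀)) = Real.exp (-η₀) := by ring
    rwa [this] at h3
  apply hmodel.congr'
  filter_upwards [eventually_ge_atTop 1] with n hn
  have hKn : KT m t n ≠ 0 := (KT_pos η₀ hη₀ m n hn).ne'
  have hG1 : Real.Gamma ((n:ℝ)+(m:ℝ)+1/2) ≠ 0 := (Real.Gamma_pos_of_pos (by positivity)).ne'
  have hG2 : Real.Gamma ((n:ℝ)+1/2) ≠ 0 := (Real.Gamma_pos_of_pos (by positivity)).ne'
  have hP : (0:ℝ) < (2:ℝ)^((n:ℝ)+1/2) := Real.rpow_pos_of_pos (by norm_num) _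
  have hD : (0:ℝ) < (t^2-1) ^ ((m:ℝ)/2) := Real.rpow_pos_of_pos (by nlinarith) _
  have hm1 : ((-1:ℝ))^m ≠ 0 := pow_ne_zero _ (by norm_num)
  show (((n:ℝ)+(m:ℝ)+1/2)/(((n:ℝ)+1/2)*2)) * (KT m t (n+1) / KT m t n) =
      qh η₀ (n+1) m / qh η₀ n m
  rw [qh, qh, Qh_eq (n+1) m ht, Qh_eq n m ht]
  have hcast : (((n+1:ℕ)):ℝ) = (n:ℝ)+1 := by push_cast; ring
  rw [hcast]
  have hGa : Real.Gamma ((n:ℝ)+1+(m:ℝ)+1/2) = ((n:ℝ)+(m:ℝ)+1/2) * Real.Gamma ((n:ℝ)+(m:ℝ)+1/2) := by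
    rw [show (n:ℝ)+1+(m:ℝ)+1/2 = ((n:ℝ)+(m:ℝ)+1/2)+1 by ring, Real.Gamma_add_one (by positivity)]
  have hGb : Real.Gamma ((n:ℝ)+1+1/2) = ((n:ℝ)+1/2) * Real.Gamma ((n:ℝ)+1/2) := by
    rw [show (n:ℝ)+1+1/2 = ((n:ℝ)+1/2)+1 by ring, Real.Gamma_add_one (by positivity)]
  have hPa : (2:ℝ)^((n:ℝ)+1+1/2) = 2 * (2:ℝ)^((n:ℝ)+1/2) := by
    rw [show (n:ℝ)+1+1/2 = ((n:ℝ)+1/2)+1 by ring, Real.rpow_add (by norm_num), Real.rpow_one]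
    ring
  rw [hGa, hGb, hPa]
  have hne : ((n:ℝ)+1/2) ≠ 0 := by positivity
  field_simp
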